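/- Let F be a field of characteristic p > 0 and let M be a circulant matrix of size p^n × p^n over F with first row (c_0, c_1, …, c_{p^n − 1}). Then det M = (c_0 + c_1 + ⋯ + c_{p^n − 1})^{p^n}. -/

import Mathlib

open Matrix

private lemma circ_single_mul {F : Type*} [Semiring F] {N : ℕ} [NeZero N] (a b : ZMod N) :
    circulant (Pi.single a (1:F)) * circulant (Pi.single b 1)
      = circulant (Pi.single (a + b) 1) := by
  rw [circulant_mul, mulVec_single, circulant_inj]
  funext i
  simp [circulant_apply, Pi.single_apply, sub_eq_iff_eq_add]

private lemma circ_single_one {F : Type*} [Semiring F] {N : ℕ} [NeZero N] :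
    circulant (Pi.single (0 : ZMod N) (1:F)) = 1 := by
  ext i j
  simp [circulant_apply, Pi.single_apply, Matrix.one_apply, sub_eq_zero]

private def circHom (F : Type*) [Semiring F] (N : ℕ) [NeZero N] :
    Multiplicative (ZMod N) →* Matrix (ZMod N) (ZMod N) F where
  toFun k := circulant (Pi.single k.toAdd (1:F))
  map_one' := circ_single_one
  map_mul' a b := (circ_single_mul (F := F) a.toAdd b.toAdd).symm

private noncomputable def circAlg (F : Type*) [Field F] (N : ℕ) [NeZero N] :
    AddMonoidAlgebra F (ZMod N) →ₐ[F] Matrix (ZMod N) (ZMod N) F :=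
  AddMonoidAlgebra.lift F _ (ZMod N) (circHom F N)

private lemma circAlg_single {F : Type*} [Field F] {N : ℕ} [NeZero N] (a : ZMod N) (b : F) :
    circAlg F N (AddMonoidAlgebra.single a b) = b • circulant (Pi.single a (1:F)) := by
  rw [circAlg, AddMonoidAlgebra.lift_single]; rfl

theorem stmt_13 (F : Type*) [Field F] (p n : ℕ) [Fact p.Prime] [CharP F p]
    [NeZero (p ^ n)] (c : ZMod (p ^ n) → F) :
    Matrix.det (Matrix.of fun i j : ZMod (p ^ n) => c (j - i))
      = (∑ k : ZMod (p ^ n), c k) ^ p ^ n := by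
  haveI : ExpChar F p := .prime Fact.out
  haveI : CharP (AddMonoidAlgebra F (ZMod (p ^ n))) p :=
    charP_of_injective_ringHom
      (f := (AddMonoidAlgebra.singleZeroRingHom :
        F →+* AddMonoidAlgebra F (ZMod (p ^ n)))) (AddMonoidAlgebra.single_right_injective (m := 0)) p
  haveI : ExpChar (AddMonoidAlgebra F (ZMod (p ^ n))) p := .prime Fact.out
  set f : AddMonoidAlgebra F (ZMod (p ^ n)) :=
    ∑ k : ZMod (p ^ n), AddMonoidAlgebra.single k (c (-k)) with hf
  have hφf : circAlg F (p ^ n) f = Matrix.of fun i j : ZMod (p ^ n) => c (j - i) := by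
    rw [hf, map_sum]
    ext i j
    simp [circAlg_single, Matrix.sum_apply, circulant_apply, Pi.single_apply,
      mul_ite, mul_one, mul_zero, Finset.sum_ite_eq, Finset.sum_ite_eq', neg_sub]
  have hsum : ∑ k : ZMod (p ^ n), c (-k) = ∑ k : ZMod (p ^ n), c k :=
    Fintype.sum_equiv (Equiv.neg _) _ _ fun k => by simp
  have hfN : f ^ p ^ n
      = AddMonoidAlgebra.single (0 : ZMod (p ^ n)) ((∑ k : ZMod (p ^ n), c k) ^ p ^ n) := by
    have h1 : f ^ p ^ n = iterateFrobenius (AddMonoidAlgebra F (ZMod (p ^ n))) p n f := rfl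
    rw [h1, hf, map_sum]
    have h2 : ∀ k : ZMod (p ^ n),
        iterateFrobenius (AddMonoidAlgebra F (ZMod (p ^ n))) p n (AddMonoidAlgebra.single k (c (-k)))
        = AddMonoidAlgebra.single (0 : ZMod (p ^ n)) (c (-k) ^ p ^ n) := by
      intro k
      rw [iterateFrobenius_def, AddMonoidAlgebra.single_pow]
      congr 1
      rw [nsmul_eq_mul]
      simp [ZMod.natCast_self]
    simp_rw [h2]
    rw [← hsum]
    calc ∑ k : ZMod (p ^ n), AddMonoidAlgebra.single (0 : ZMod (p ^ n)) (c (-k) ^ p ^ n)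
        = AddMonoidAlgebra.single (0 : ZMod (p ^ n)) (∑ k : ZMod (p ^ n), c (-k) ^ p ^ n) :=
          (map_sum (AddMonoidAlgebra.singleAddHom _) _ _).symm
      _ = _ := by
          congr 1
          calc ∑ k : ZMod (p ^ n), c (-k) ^ p ^ n
              = ∑ k : ZMod (p ^ n), iterateFrobenius F p n (c (-k)) := rfl
            _ = iterateFrobenius F p n (∑ k : ZMod (p ^ n), c (-k)) := (map_sum _ _ _).symm
            _ = (∑ k : ZMod (p ^ n), c (-k)) ^ p ^ n := rfl
  have hMN : (Matrix.of fun i j : ZMod (p ^ n) => c (j - i)) ^ p ^ n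
      = ((∑ k : ZMod (p ^ n), c k) ^ p ^ n) • (1 : Matrix (ZMod (p ^ n)) (ZMod (p ^ n)) F) := by
    rw [← hφf, ← map_pow, hfN, circAlg_single, circ_single_one]
  have hdet : (Matrix.det (Matrix.of fun i j : ZMod (p ^ n) => c (j - i))) ^ p ^ n
      = ((∑ k : ZMod (p ^ n), c k) ^ p ^ n) ^ p ^ n := by
    rw [← Matrix.det_pow, hMN, Matrix.det_smul, Matrix.det_one, mul_one, ZMod.card]
  exact (iterateFrobenius F p n).injective hdet
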